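/- arXiv:1307.5620 — 6 statements merged into one kernel-verified Lean document; each statement's English description precedes it below -/
import Mathlib

section
/- The inclusions cs₀^λ ⊆ cs^λ ⊆ bs^λ hold and both are strict: there exists x ∈ cs^λ with x ∉ cs₀^λ (for instance x_k = (λ_k/(k+2)² − λ_{k−1}/(k+1)²)/(λ_k − λ_{k−1})), and there exists y ∈ bs^λ with y ∉ cs^λ (for instance y_k = (−1)^k·(λ_k + λ_{k−1})/(λ_k − λ_{k−1})). -/
open Filter Topology

/-- `dl l k = λ_k - λ_{k-1}` with the convention `λ_{-1} = 0`. -/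
noncomputable def dl (l : ℕ → ℝ) (k : ℕ) : ℝ := l k - (if k = 0 then 0 else l (k - 1))

/-- `LamT l x n = Λ_n(x) = (1/λ_n) ∑_{k=0}^n (λ_k - λ_{k-1}) x_k`. -/
noncomputable def LamT (l : ℕ → ℝ) (x : ℕ → ℂ) (n : ℕ) : ℂ :=
  (1 / (l n : ℂ)) * ∑ k ∈ Finset.range (n + 1), ((dl l k : ℝ) : ℂ) * x k

/-- `cs^λ`: the partial sums `∑_{n=0}^m Λ_n(x)` converge. -/
def csLam (l : ℕ → ℝ) : Set (ℕ → ℂ) :=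
  {x | ∃ L, Tendsto (fun m => ∑ n ∈ Finset.range (m + 1), LamT l x n) atTop (𝓝 L)}

/-- `cs₀^λ`: the partial sums `∑_{n=0}^m Λ_n(x)` tend to `0`. -/
def cs0Lam (l : ℕ → ℝ) : Set (ℕ → ℂ) :=
  {x | Tendsto (fun m => ∑ n ∈ Finset.range (m + 1), LamT l x n) atTop (𝓝 0)}

/-- `bs^λ`: the partial sums `∑_{n=0}^m Λ_n(x)` are bounded. -/
def bsLam (l : ℕ → ℝ) : Set (ℕ → ℂ) :=
  {x | ∃ C, ∀ m, ‖∑ n ∈ Finset.range (m + 1), LamT l x n‖ ≤ C}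

lemma sum_tele (l a : ℕ → ℝ) (n : ℕ) :
    ∑ k ∈ Finset.range (n+1), (l k * a k - (if k = 0 then 0 else l (k-1) * a (k-1)))
      = l n * a n := by
  induction n with
  | zero => simp
  | succ n ih =>
      rw [Finset.sum_range_succ, ih]
      simp only [Nat.succ_ne_zero, if_false, Nat.add_sub_cancel]
      ring

lemma LamT_eq (l : ℕ → ℝ) (hmono : StrictMono l) (hpos : 0 < l 0) (a : ℕ → ℝ) (n : ℕ) :
    LamT l (fun k => (((l k * a k - (if k = 0 then 0 else l (k-1) * a (k-1))) / dl l k : ℝ) : ℂ)) n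
      = (a n : ℂ) := by
  have lpos : ∀ m, 0 < l m := fun m => lt_of_lt_of_le hpos (hmono.monotone (Nat.zero_le m))
  have dlpos : ∀ k, 0 < dl l k := by
    intro k
    cases k with
    | zero => simpa [dl] using hpos
    | succ k => simpa [dl] using sub_pos.mpr (hmono (Nat.lt_succ_self k))
  unfold LamT
  have hterm : ∀ k, ((dl l k : ℝ) : ℂ) *
      (((l k * a k - (if k = 0 then 0 else l (k-1) * a (k-1))) / dl l k : ℝ) : ℂ)
      = (((l k * a k - (if k = 0 then 0 else l (k-1) * a (k-1))) : ℝ) : ℂ) := by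
    intro k
    rw [← Complex.ofReal_mul, mul_div_cancel₀ _ (dlpos k).ne']
  rw [Finset.sum_congr rfl fun k _ => hterm k, ← Complex.ofReal_sum, sum_tele]
  have hl : ((l n : ℝ) : ℂ) ≠ 0 := Complex.ofReal_ne_zero.mpr (lpos n).ne'
  push_cast
  field_simp

theorem stmt3 (l : ℕ → ℝ) (hmono : StrictMono l) (hpos : 0 < l 0)
    (hlim : Tendsto l atTop atTop) :
    cs0Lam l ⊆ csLam l ∧ csLam l ⊆ bsLam l ∧
    ((fun k => (((l k * (1 / ((k : ℝ) + 2) ^ 2) -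
        (if k = 0 then 0 else l (k - 1)) * (1 / ((k : ℝ) + 1) ^ 2)) / dl l k : ℝ) : ℂ)) ∈
      csLam l \ cs0Lam l) ∧
    ((fun k => (((-1 : ℝ) ^ k * (l k + (if k = 0 then 0 else l (k - 1))) / dl l k : ℝ) : ℂ)) ∈
      bsLam l \ csLam l) := by
  refine ⟨fun x hx => ⟨0, hx⟩, ?_, ?_, ?_⟩
  · -- cs ⊆ bs
    rintro x ⟨L, hL⟩
    obtain ⟨C, hC⟩ := hL.norm.bddAbove_range
    exact ⟨C, fun m => hC ⟨m, rfl⟩⟩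
  · -- witness 1
    set a : ℕ → ℝ := fun k => 1 / ((k : ℝ) + 2) ^ 2 with ha
    have hfun : (fun k => (((l k * (1 / ((k : ℝ) + 2) ^ 2) -
        (if k = 0 then 0 else l (k - 1)) * (1 / ((k : ℝ) + 1) ^ 2)) / dl l k : ℝ) : ℂ))
        = (fun k => (((l k * a k - (if k = 0 then 0 else l (k-1) * a (k-1))) / dl l k : ℝ) : ℂ)) := by
      funext k
      cases k with
      | zero => simp [ha]
      | succ k =>
          simp only [ha, Nat.succ_ne_zero, if_false, Nat.add_sub_cancel]
          norm_num
          push_cast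
          ring_nf
    rw [hfun]
    have hL : ∀ m, ∑ n ∈ Finset.range (m + 1),
        LamT l (fun k => (((l k * a k - (if k = 0 then 0 else l (k-1) * a (k-1))) / dl l k : ℝ) : ℂ)) n
        = ((∑ n ∈ Finset.range (m + 1), a n : ℝ) : ℂ) := by
      intro m
      rw [Complex.ofReal_sum]
      exact Finset.sum_congr rfl fun n _ => LamT_eq l hmono hpos a n
    have hsum : Summable a := by
      have : Summable (fun n : ℕ => 1 / ((n : ℝ)) ^ 2) :=
        (Real.summable_one_div_nat_pow).mpr one_lt_two
      have := (summable_nat_add_iff 2).mpr this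
      refine this.congr fun n => ?_
      push_cast
      ring_nf
      simp only [ha]; ring
    have hpos' : 0 < ∑' n, a n :=
      Summable.tsum_pos hsum (fun n => by positivity) 0 (by norm_num [ha])
    have htend : Tendsto (fun m => ∑ n ∈ Finset.range (m + 1), a n) atTop (𝓝 (∑' n, a n)) :=
      hsum.hasSum.tendsto_sum_nat.comp (tendsto_add_atTop_nat 1)
    have key : (fun m => ∑ n ∈ Finset.range (m + 1),
        LamT l (fun k => (((l k * a k - (if k = 0 then 0 else l (k-1) * a (k-1))) / dl l k : ℝ) : ℂ)) n)
        = fun m => ((∑ n ∈ Finset.range (m + 1), a n : ℝ) : ℂ) := funext hL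
    have hC : Tendsto (fun m => ((∑ n ∈ Finset.range (m + 1), a n : ℝ) : ℂ)) atTop
        (𝓝 ((∑' n, a n : ℝ) : ℂ)) := (Complex.continuous_ofReal.tendsto _).comp htend
    constructor
    · refine ⟨((∑' n, a n : ℝ) : ℂ), ?_⟩
      rw [key]; exact hC
    · intro hbad
      simp only [cs0Lam, Set.mem_setOf_eq] at hbad
      rw [key] at hbad
      have := tendsto_nhds_unique hbad hC
      rw [eq_comm, Complex.ofReal_eq_zero] at this
      exact hpos'.ne' this
  · -- witness 2
    set a : ℕ → ℝ := fun k => (-1 : ℝ) ^ k with ha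
    have hfun : (fun k => (((-1 : ℝ) ^ k * (l k + (if k = 0 then 0 else l (k - 1))) / dl l k : ℝ) : ℂ))
        = (fun k => (((l k * a k - (if k = 0 then 0 else l (k-1) * a (k-1))) / dl l k : ℝ) : ℂ)) := by
      funext k
      cases k with
      | zero => simp [ha]
      | succ k =>
          simp only [ha, Nat.succ_ne_zero, if_false, Nat.add_sub_cancel]
          norm_num
          ring_nf
    rw [hfun]
    have hS : ∀ m, ∑ n ∈ Finset.range (m + 1),
        LamT l (fun k => (((l k * a k - (if k = 0 then 0 else l (k-1) * a (k-1))) / dl l k : ℝ) : ℂ)) n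
        = (if Even (m + 1) then 0 else 1 : ℂ) := by
      intro m
      have h1 : ∀ n : ℕ, ((a n : ℝ) : ℂ) = (-1 : ℂ) ^ n := by
        intro n; push_cast [ha]; ring
      rw [Finset.sum_congr rfl fun n _ => (LamT_eq l hmono hpos a n).trans (h1 n)]
      exact neg_one_geom_sum
    constructor
    · refine ⟨1, fun m => ?_⟩
      rw [hS m]
      split <;> simp
    · rintro ⟨L, hL⟩
      have heven : Tendsto (fun j : ℕ => ∑ n ∈ Finset.range (2 * j + 1),
          LamT l (fun k => (((l k * a k - (if k = 0 then 0 else l (k-1) * a (k-1))) / dl l k : ℝ) : ℂ)) n)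
          atTop (𝓝 L) := by
        exact hL.comp (tendsto_atTop_atTop.mpr fun b => ⟨b, fun a hab => by omega⟩)
      have hodd : Tendsto (fun j : ℕ => ∑ n ∈ Finset.range (2 * j + 2),
          LamT l (fun k => (((l k * a k - (if k = 0 then 0 else l (k-1) * a (k-1))) / dl l k : ℝ) : ℂ)) n)
          atTop (𝓝 L) := by
        have := hL.comp (tendsto_atTop_atTop.mpr (fun b => ⟨b, fun a hab => by omega⟩) :
          Tendsto (fun j : ℕ => 2 * j + 1) atTop atTop)
        simpa [Function.comp_def, Nat.add_assoc] using this
      have he : ∀ j : ℕ, ∑ n ∈ Finset.range (2 * j + 1),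
          LamT l (fun k => (((l k * a k - (if k = 0 then 0 else l (k-1) * a (k-1))) / dl l k : ℝ) : ℂ)) n
          = 1 := by
        intro j
        have := hS (2 * j)
        rw [this]
        simp [Nat.even_add_one, parity_simps]
      have ho : ∀ j : ℕ, ∑ n ∈ Finset.range (2 * j + 2),
          LamT l (fun k => (((l k * a k - (if k = 0 then 0 else l (k-1) * a (k-1))) / dl l k : ℝ) : ℂ)) n
          = 0 := by
        intro j
        have := hS (2 * j + 1)
        rw [show 2 * j + 1 + 1 = 2 * j + 2 from rfl] at this
        rw [this]
        simp [Nat.even_add_one, parity_simps]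
      rw [funext he] at heven
      rw [funext ho] at hodd
      have h1 : L = 1 := tendsto_nhds_unique heven tendsto_const_nhds
      have h0 : L = 0 := tendsto_nhds_unique hodd tendsto_const_nhds
      rw [h1] at h0
      exact one_ne_zero h0
end

section
/- The inclusion cs₀^λ ⊆ cs₀ holds if and only if S(x) ∈ cs₀ for every sequence x ∈ cs₀^λ; that is, every x with ∑_{n=0}^m Λ_n(x) → 0 satisfies ∑_{k=0}^m x_k → 0 if and only if for every such x one has ∑_{n=0}^m S_n(x) → 0. -/
open Filter Topology

/-- `Sop l x n = S_n(x)`: `S_0(x) = 0` and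
`S_n(x) = (1/λ_n) ∑_{k=1}^n λ_{k-1} (x_k - x_{k-1})` for `n ≥ 1`. -/
noncomputable def Sop (l : ℕ → ℝ) (x : ℕ → ℂ) (n : ℕ) : ℂ :=
  if n = 0 then 0
  else (1 / (l n : ℂ)) * ∑ k ∈ Finset.Icc 1 n, (l (k - 1) : ℂ) * (x k - x (k - 1))

lemma key_sum (l : ℕ → ℝ) (x : ℕ → ℂ) (n : ℕ) :
    (∑ k ∈ Finset.range (n + 1), ((dl l k : ℝ) : ℂ) * x k)
      + ∑ k ∈ Finset.Icc 1 n, (l (k - 1) : ℂ) * (x k - x (k - 1))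
    = (l n : ℂ) * x n := by
  induction n with
  | zero => simp [dl]
  | succ n ih =>
    rw [Finset.sum_range_succ, Finset.sum_Icc_succ_top (by omega : 1 ≤ n + 1)]
    have hdl : dl l (n + 1) = l (n + 1) - l n := by simp [dl]
    have h1 : n + 1 - 1 = n := rfl
    rw [show (∑ k ∈ Finset.range (n + 1), ((dl l k : ℝ) : ℂ) * x k) + ((dl l (n+1) : ℝ) : ℂ) * x (n+1)
        + ((∑ k ∈ Finset.Icc 1 n, (l (k - 1) : ℂ) * (x k - x (k - 1)))
          + (l (n + 1 - 1) : ℂ) * (x (n+1) - x (n + 1 - 1)))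
      = ((∑ k ∈ Finset.range (n + 1), ((dl l k : ℝ) : ℂ) * x k)
          + ∑ k ∈ Finset.Icc 1 n, (l (k - 1) : ℂ) * (x k - x (k - 1)))
        + (((dl l (n+1) : ℝ) : ℂ) * x (n+1) + (l n : ℂ) * (x (n+1) - x n)) by rw [h1]; ring,
      ih, hdl]
    push_cast
    ring

lemma x_eq (l : ℕ → ℝ) (hmono : StrictMono l) (hpos : 0 < l 0) (x : ℕ → ℂ) (n : ℕ) :
    x n = LamT l x n + Sop l x n := by
  have hln : (0:ℝ) < l n := lt_of_lt_of_le hpos (hmono.monotone (Nat.zero_le n))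
  have hln' : (l n : ℂ) ≠ 0 := by exact_mod_cast hln.ne'
  rcases Nat.eq_zero_or_pos n with h0 | h0
  · subst h0
    simp [LamT, Sop, dl]
    field_simp
  · rw [LamT, Sop, if_neg h0.ne', ← mul_add, key_sum]
    field_simp

theorem stmt7 (l : ℕ → ℝ) (hmono : StrictMono l) (hpos : 0 < l 0)
    (hlim : Tendsto l atTop atTop) :
    (∀ x ∈ cs0Lam l, Tendsto (fun m => ∑ k ∈ Finset.range (m + 1), x k) atTop (𝓝 0)) ↔
    (∀ x ∈ cs0Lam l, Tendsto (fun m => ∑ n ∈ Finset.range (m + 1), Sop l x n) atTop (𝓝 0)) := by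
  have hsplit : ∀ (x : ℕ → ℂ) m, ∑ k ∈ Finset.range (m + 1), x k
      = (∑ n ∈ Finset.range (m + 1), LamT l x n) + ∑ n ∈ Finset.range (m + 1), Sop l x n := by
    intro x m
    rw [← Finset.sum_add_distrib]
    exact Finset.sum_congr rfl fun k _ => x_eq l hmono hpos x k
  constructor
  · intro h x hx
    have h1 := (h x hx).sub hx
    simp only [sub_zero] at h1
    convert h1 using 2 with m
    rw [hsplit x m]; ring
  · intro h x hx
    have h1 := hx.add (h x hx)
    simp only [add_zero] at h1
    convert h1 using 2 with m
    exact hsplit x m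
end

section
/- For every x ∈ cs^λ, the partial sums of the expansion with respect to the basis sequences converge to x in the norm ‖·‖_{bs^λ}: writing x^[M] = ∑_{n=0}^M Λ_n(x)·e_λ^(n), one has ‖x − x^[M]‖_{bs^λ} → 0 as M → ∞; the same holds for every x ∈ cs₀^λ. -/
open Filter Topology

/-- The norm `‖x‖_{bs^λ} = sup_m |∑_{n=0}^m Λ_n(x)|`. -/
noncomputable def bsLamNorm (l : ℕ → ℝ) (x : ℕ → ℂ) : ℝ :=
  ⨆ m, ‖∑ n ∈ Finset.range (m + 1), LamT l x n‖

/-- The basis sequence `e_λ^(n)`: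
`(e_λ^(n))_k = (-1)^{k-n} λ_n/(λ_k - λ_{k-1})` if `n ≤ k ≤ n+1`, and `0` otherwise. -/
noncomputable def eLam (l : ℕ → ℝ) (n : ℕ) (k : ℕ) : ℂ :=
  if n ≤ k ∧ k ≤ n + 1 then (-1 : ℂ) ^ (k - n) * (l n : ℂ) / ((dl l k : ℝ) : ℂ) else 0

lemma my_l_pos (l : ℕ → ℝ) (hmono : StrictMono l) (hpos : 0 < l 0) (n : ℕ) : 0 < l n :=
  lt_of_lt_of_le hpos (hmono.monotone (Nat.zero_le n))

lemma my_dl_pos (l : ℕ → ℝ) (hmono : StrictMono l) (hpos : 0 < l 0) (k : ℕ) : 0 < dl l k := by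
  cases k with
  | zero => simpa [dl] using hpos
  | succ m => simpa [dl] using sub_pos.mpr (hmono (Nat.lt_succ_self m))

lemma my_LamT_eLam (l : ℕ → ℝ) (hmono : StrictMono l) (hpos : 0 < l 0) (j n : ℕ) :
    LamT l (eLam l j) n = if n = j then 1 else 0 := by
  have hl : ∀ m, (l m : ℂ) ≠ 0 := fun m => by
    exact_mod_cast (my_l_pos l hmono hpos m).ne'
  have hd : ∀ m, ((dl l m : ℝ) : ℂ) ≠ 0 := fun m => by
    exact_mod_cast (my_dl_pos l hmono hpos m).ne'
  have hsum : ∀ k, ((dl l k : ℝ) : ℂ) * eLam l j k =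
      (if k = j then (l j : ℂ) else 0) + (if k = j + 1 then -(l j : ℂ) else 0) := by
    intro k
    unfold eLam
    by_cases h1 : k = j
    · subst h1
      rw [if_pos ⟨le_refl _, Nat.le_succ _⟩, if_pos rfl, if_neg (by omega),
        Nat.sub_self, pow_zero, one_mul, add_zero, mul_comm, div_mul_cancel₀ _ (hd _)]
    · by_cases h2 : k = j + 1
      · subst h2
        rw [if_pos ⟨Nat.le_succ j, le_refl _⟩, if_neg h1, if_pos rfl]
        have h4 : j + 1 - j = 1 := by omega
        rw [h4, pow_one, neg_one_mul, neg_div, mul_comm, neg_mul, div_mul_cancel₀ _ (hd (j+1))]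
        exact (zero_add _).symm
      · have h3 : ¬(j ≤ k ∧ k ≤ j + 1) := by omega
        simp [h3, h1, h2]
  unfold LamT
  rw [Finset.sum_congr rfl (fun k _ => hsum k), Finset.sum_add_distrib,
    Finset.sum_ite_eq' (Finset.range (n + 1)) j (fun _ => (l j : ℂ)),
    Finset.sum_ite_eq' (Finset.range (n + 1)) (j + 1) (fun _ => -(l j : ℂ))]
  simp only [Finset.mem_range]
  rcases lt_trichotomy n j with h | h | h
  · rw [if_neg (by omega), if_neg (by omega), if_neg (by omega)]
    simp
  · subst h
    rw [if_pos (by omega), if_neg (by omega), if_pos rfl, add_zero, one_div,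
      inv_mul_cancel₀ (hl _)]
  · rw [if_pos (by omega), if_pos (by omega), if_neg (by omega)]
    simp

lemma my_LamT_linear (l : ℕ → ℝ) (x : ℕ → ℂ) (c : ℕ → ℂ) (M n : ℕ) :
    LamT l (fun k => x k - ∑ j ∈ Finset.range (M + 1), c j * eLam l j k) n
      = LamT l x n - ∑ j ∈ Finset.range (M + 1), c j * LamT l (eLam l j) n := by
  unfold LamT
  have key : ∑ k ∈ Finset.range (n + 1),
        ((dl l k : ℝ) : ℂ) * ∑ j ∈ Finset.range (M + 1), c j * eLam l j k
      = ∑ j ∈ Finset.range (M + 1),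
        c j * ∑ k ∈ Finset.range (n + 1), ((dl l k : ℝ) : ℂ) * eLam l j k := by
    simp only [Finset.mul_sum]
    rw [Finset.sum_comm]
    exact Finset.sum_congr rfl fun j _ => Finset.sum_congr rfl fun k _ => by ring
  have expand : ∑ k ∈ Finset.range (n + 1),
        ((dl l k : ℝ) : ℂ) * (x k - ∑ j ∈ Finset.range (M + 1), c j * eLam l j k)
      = (∑ k ∈ Finset.range (n + 1), ((dl l k : ℝ) : ℂ) * x k)
        - ∑ j ∈ Finset.range (M + 1),
            c j * ∑ k ∈ Finset.range (n + 1), ((dl l k : ℝ) : ℂ) * eLam l j k := by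
    rw [← key]; simp only [mul_sub, Finset.sum_sub_distrib]
  rw [expand, mul_sub]
  congr 1
  rw [Finset.mul_sum]
  exact Finset.sum_congr rfl fun j _ => by ring

lemma my_S_diff (l : ℕ → ℝ) (hmono : StrictMono l) (hpos : 0 < l 0) (x : ℕ → ℂ)
    (M m : ℕ) :
    ∑ n ∈ Finset.range (m + 1),
        LamT l (fun k => x k - ∑ j ∈ Finset.range (M + 1), LamT l x j * eLam l j k) n
      = (∑ n ∈ Finset.range (m + 1), LamT l x n)
        - ∑ n ∈ Finset.range (min m M + 1), LamT l x n := by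
  have h1 : ∀ n, LamT l (fun k => x k - ∑ j ∈ Finset.range (M + 1), LamT l x j * eLam l j k) n
      = LamT l x n - (if n ≤ M then LamT l x n else 0) := by
    intro n
    rw [my_LamT_linear]
    congr 1
    simp only [my_LamT_eLam l hmono hpos, mul_ite, mul_one, mul_zero]
    rw [Finset.sum_ite_eq (Finset.range (M + 1)) n (fun j => LamT l x j)]
    simp [Nat.lt_succ_iff]
  simp only [h1, Finset.sum_sub_distrib]
  congr 1
  rw [← Finset.sum_filter]
  apply Finset.sum_congr
  · ext n
    simp only [Finset.mem_filter, Finset.mem_range]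
    omega
  · intros; rfl

lemma my_main (l : ℕ → ℝ) (hmono : StrictMono l) (hpos : 0 < l 0) (x : ℕ → ℂ)
    (hc : CauchySeq (fun m => ∑ n ∈ Finset.range (m + 1), LamT l x n)) :
    Tendsto (fun M => bsLamNorm l
      (fun k => x k - ∑ n ∈ Finset.range (M + 1), LamT l x n * eLam l n k)) atTop (𝓝 0) := by
  set S : ℕ → ℂ := fun m => ∑ n ∈ Finset.range (m + 1), LamT l x n with hSdef
  rw [Metric.tendsto_atTop]
  intro ε hε
  obtain ⟨N, hN⟩ := Metric.cauchySeq_iff.mp hc (ε / 2) (by positivity)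
  refine ⟨N, fun M hM => ?_⟩
  have hrw : ∀ m, ∑ n ∈ Finset.range (m + 1),
      LamT l (fun k => x k - ∑ j ∈ Finset.range (M + 1), LamT l x j * eLam l j k) n
      = S m - S (min m M) := fun m => my_S_diff l hmono hpos x M m
  have hbound : ∀ m, ‖∑ n ∈ Finset.range (m + 1),
      LamT l (fun k => x k - ∑ j ∈ Finset.range (M + 1), LamT l x j * eLam l j k) n‖ ≤ ε / 2 := by
    intro m
    rw [hrw m]
    by_cases h : m ≤ M
    · rw [min_eq_left h, sub_self, norm_zero]
      positivity
    · rw [min_eq_right (le_of_not_ge h)]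
      have := hN m (le_trans hM (le_of_lt (lt_of_not_ge h))) M hM
      rw [dist_eq_norm] at this
      exact le_of_lt this
  have hnn : (0:ℝ) ≤ bsLamNorm l
      (fun k => x k - ∑ n ∈ Finset.range (M + 1), LamT l x n * eLam l n k) :=
    Real.iSup_nonneg fun m => norm_nonneg _
  rw [Real.dist_eq, sub_zero, abs_of_nonneg hnn]
  calc bsLamNorm l (fun k => x k - ∑ n ∈ Finset.range (M + 1), LamT l x n * eLam l n k)
      ≤ ε / 2 := ciSup_le hbound
    _ < ε := by linarith

theorem stmt9 (l : ℕ → ℝ) (hmono : StrictMono l) (hpos : 0 < l 0)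
    (hlim : Tendsto l atTop atTop) :
    (∀ x ∈ csLam l,
      Tendsto (fun M => bsLamNorm l
        (fun k => x k - ∑ n ∈ Finset.range (M + 1), LamT l x n * eLam l n k)) atTop (𝓝 0)) ∧
    (∀ x ∈ cs0Lam l,
      Tendsto (fun M => bsLamNorm l
        (fun k => x k - ∑ n ∈ Finset.range (M + 1), LamT l x n * eLam l n k)) atTop (𝓝 0)) := by
  constructor
  · intro x hx
    obtain ⟨L, hL⟩ := hx
    exact my_main l hmono hpos x hL.cauchySeq
  · intro x hx
    exact my_main l hmono hpos x hx.cauchySeq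
end

section
/- The expansion of an element of cs^λ with respect to the sequences e_λ^(n) is unique: if x ∈ cs^λ and α : ℕ → ℂ is a sequence of scalars such that ‖x − ∑_{n=0}^M α_n·e_λ^(n)‖_{bs^λ} → 0 as M → ∞, then α_k = Λ_k(x) for every k ∈ ℕ. -/
open Filter Topology

theorem stmt10 (l : ℕ → ℝ) (hmono : StrictMono l) (hpos : 0 < l 0)
    (hlim : Tendsto l atTop atTop) (x : ℕ → ℂ) (hx : x ∈ csLam l) (α : ℕ → ℂ)
    (hα : Tendsto (fun M => bsLamNorm l
      (fun k => x k - ∑ n ∈ Finset.range (M + 1), α n * eLam l n k)) atTop (𝓝 0)) :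
    ∀ k, α k = LamT l x k := by
  obtain ⟨L, hL⟩ := hx
  have lpos : ∀ k, 0 < l k := fun k => lt_of_lt_of_le hpos (hmono.monotone (Nat.zero_le k))
  have dlpos : ∀ k, 0 < dl l k := by
    intro k
    unfold dl
    cases k with
    | zero => simpa using hpos
    | succ j =>
      rw [if_neg (Nat.succ_ne_zero j)]
      simpa using sub_pos.mpr (hmono (Nat.lt_succ_self j))
  have dlne : ∀ k, ((dl l k : ℝ) : ℂ) ≠ 0 := fun k => by exact_mod_cast (dlpos k).ne'
  have lne : ∀ k, ((l k : ℝ) : ℂ) ≠ 0 := fun k => by exact_mod_cast (lpos k).ne'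
  -- Λ_m(e^(n)) = δ_{mn}
  have hLe : ∀ n m, LamT l (eLam l n) m = if m = n then 1 else 0 := by
    intro n m
    unfold LamT
    rcases lt_trichotomy m n with h | h | h
    · rw [if_neg h.ne, Finset.sum_eq_zero, mul_zero]
      intro k hk
      have hk' : k < m + 1 := Finset.mem_range.mp hk
      have : ¬ (n ≤ k ∧ k ≤ n + 1) := by omega
      simp [eLam, this]
    · subst h
      rw [if_pos rfl, Finset.sum_eq_single m]
      · have : eLam l m m = (l m : ℂ) / ((dl l m : ℝ) : ℂ) := by
          simp [eLam]
        rw [this, mul_comm ((dl l m : ℝ) : ℂ), div_mul_cancel₀ _ (dlne m),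
          one_div_mul_cancel (lne m)]
      · intro k hk hkm
        have hk' : k < m + 1 := Finset.mem_range.mp hk
        have : ¬ (m ≤ k ∧ k ≤ m + 1) := by omega
        simp [eLam, this]
      · intro h; exact absurd (Finset.self_mem_range_succ m) h
    · rw [if_neg h.ne']
      have hsub : ({n, n + 1} : Finset ℕ) ⊆ Finset.range (m + 1) := by
        intro k hk
        simp only [Finset.mem_insert, Finset.mem_singleton] at hk
        simp only [Finset.mem_range]; omega
      have hzero : ∀ k ∈ Finset.range (m + 1), k ∉ ({n, n + 1} : Finset ℕ) →
          ((dl l k : ℝ) : ℂ) * eLam l n k = 0 := by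
        intro k _ hk
        simp only [Finset.mem_insert, Finset.mem_singleton, not_or] at hk
        have : ¬ (n ≤ k ∧ k ≤ n + 1) := by omega
        simp [eLam, this]
      rw [← Finset.sum_subset hsub hzero,
        Finset.sum_pair (by omega : n ≠ n + 1)]
      have e1 : eLam l n n = (l n : ℂ) / ((dl l n : ℝ) : ℂ) := by simp [eLam]
      have e2 : eLam l n (n + 1) = -((l n : ℂ) / ((dl l (n + 1) : ℝ) : ℂ)) := by
        simp [eLam, pow_one, neg_div]
      rw [e1, e2, mul_comm ((dl l n : ℝ) : ℂ), div_mul_cancel₀ _ (dlne n),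
        mul_neg, mul_comm ((dl l (n+1) : ℝ) : ℂ), div_mul_cancel₀ _ (dlne (n+1))]
      simp
  -- per-term linearity
  have hterm : ∀ M j, LamT l (fun k => x k - ∑ n ∈ Finset.range (M + 1), α n * eLam l n k) j
      = LamT l x j - (if j ≤ M then α j else 0) := by
    intro M j
    have hlin : LamT l (fun k => x k - ∑ n ∈ Finset.range (M + 1), α n * eLam l n k) j
        = LamT l x j - ∑ n ∈ Finset.range (M + 1), α n * LamT l (eLam l n) j := by
      unfold LamT
      simp only [mul_sub, Finset.sum_sub_distrib, Finset.mul_sum]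
      congr 1
      rw [Finset.sum_comm]
      apply Finset.sum_congr rfl
      intro n _
      apply Finset.sum_congr rfl
      intro k _
      ring
    rw [hlin]
    congr 1
    simp only [hLe, mul_ite, mul_one, mul_zero, Finset.sum_ite_eq, Finset.mem_range,
      Nat.lt_succ_iff]
  have hS : ∀ M m, (∑ j ∈ Finset.range (m + 1),
        LamT l (fun k => x k - ∑ n ∈ Finset.range (M + 1), α n * eLam l n k) j)
      = (∑ j ∈ Finset.range (m + 1), LamT l x j)
        - ∑ j ∈ Finset.range (m + 1), (if j ≤ M then α j else 0) := by
    intro M m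
    rw [← Finset.sum_sub_distrib]
    exact Finset.sum_congr rfl fun j _ => hterm M j
  -- boundedness of partial sums for each M
  have hc : ∀ M m, M ≤ m → (∑ j ∈ Finset.range (m + 1), (if j ≤ M then α j else 0))
      = ∑ j ∈ Finset.range (M + 1), α j := by
    intro M m hMm
    calc (∑ j ∈ Finset.range (m + 1), (if j ≤ M then α j else 0))
        = ∑ j ∈ Finset.range (M + 1), (if j ≤ M then α j else 0) := by
          apply (Finset.sum_subset (Finset.range_subset_range.mpr (by omega)) ?_).symm
          intro j hj hj'
          have h1 := Finset.mem_range.mp hj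
          have h2 : ¬ j < M + 1 := fun h => hj' (Finset.mem_range.mpr h)
          rw [if_neg (by omega)]
      _ = ∑ j ∈ Finset.range (M + 1), α j :=
          Finset.sum_congr rfl fun j hj => if_pos (by
            have := Finset.mem_range.mp hj; omega)
  have hbdd : ∀ M, BddAbove (Set.range fun m => ‖∑ j ∈ Finset.range (m + 1),
      LamT l (fun k => x k - ∑ n ∈ Finset.range (M + 1), α n * eLam l n k) j‖) := by
    intro M
    have htc : Tendsto (fun m => ∑ j ∈ Finset.range (m + 1), (if j ≤ M then α j else 0))
        atTop (𝓝 (∑ j ∈ Finset.range (M + 1), α j)) := by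
      apply Tendsto.congr' _ tendsto_const_nhds
      filter_upwards [eventually_ge_atTop M] with m hm
      exact (hc M m hm).symm
    have ht : Tendsto (fun m => ‖∑ j ∈ Finset.range (m + 1),
        LamT l (fun k => x k - ∑ n ∈ Finset.range (M + 1), α n * eLam l n k) j‖)
        atTop (𝓝 ‖L - ∑ j ∈ Finset.range (M + 1), α j‖) := by
      apply Tendsto.norm
      apply Tendsto.congr _ (hL.sub htc)
      intro m
      exact (hS M m).symm
    exact ht.bddAbove_range
  -- the key identity
  have hkey : ∀ m, (∑ j ∈ Finset.range (m + 1), LamT l x j)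
      = ∑ j ∈ Finset.range (m + 1), α j := by
    intro m
    have hev : ∀ᶠ M in atTop, ‖(∑ j ∈ Finset.range (m + 1), LamT l x j)
        - ∑ j ∈ Finset.range (m + 1), α j‖ ≤ bsLamNorm l
          (fun k => x k - ∑ n ∈ Finset.range (M + 1), α n * eLam l n k) := by
      filter_upwards [eventually_ge_atTop m] with M hM
      have heq : (∑ j ∈ Finset.range (m + 1), LamT l x j) - ∑ j ∈ Finset.range (m + 1), α j
          = ∑ j ∈ Finset.range (m + 1),
            LamT l (fun k => x k - ∑ n ∈ Finset.range (M + 1), α n * eLam l n k) j := by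
        rw [hS M m]
        congr 1
        exact Finset.sum_congr rfl fun j hj => (if_pos (by
          have := Finset.mem_range.mp hj; omega)).symm
      rw [heq]
      exact le_ciSup (hbdd M) m
    have hle := ge_of_tendsto hα hev
    have h0 : ‖(∑ j ∈ Finset.range (m + 1), LamT l x j)
        - ∑ j ∈ Finset.range (m + 1), α j‖ = 0 := le_antisymm hle (norm_nonneg _)
    exact sub_eq_zero.mp (norm_eq_zero.mp h0)
  intro k
  cases k with
  | zero =>
    have := hkey 0
    simpa [Finset.sum_range_one] using this.symm
  | succ j =>
    have h1 := hkey (j + 1)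
    have h2 := hkey j
    simp only [Finset.sum_range_succ] at h1 h2
    linear_combination h2 - h1
end

section
/- A sequence a : ℕ → ℂ belongs to the α-dual of cs^λ (i.e. ∑_k |a_k·x_k| < ∞ for every x ∈ cs^λ) if and only if sup over all finite sets N, K ⊆ ℕ of |∑_{n∈N} ∑_{k∈K} (b_{nk} − b_{n,k−1})| is finite, where b_{nk} = (−1)^{n−k}·λ_k/(λ_n − λ_{n−1})·a_n if n−1 ≤ k ≤ n and b_{nk} = 0 otherwise (with b_{n,−1} = 0). -/
open Filter Topology

/-- The matrix `B^λ = (b_{nk})` associated with the sequence `a`: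
`b_{nk} = (-1)^{n-k} λ_k/(λ_n - λ_{n-1}) a_n` if `n-1 ≤ k ≤ n`, and `0` otherwise. -/
noncomputable def Bmat (l : ℕ → ℝ) (a : ℕ → ℂ) (n k : ℕ) : ℂ :=
  if n ≤ k + 1 ∧ k ≤ n then (-1 : ℂ) ^ (n - k) * (l k : ℂ) / ((dl l n : ℝ) : ℂ) * a n else 0

noncomputable def cm (l : ℕ → ℝ) (a : ℕ → ℂ) (n k : ℕ) : ℂ :=
  Bmat l a n k - (if k = 0 then 0 else Bmat l a n (k - 1))

variable {l : ℕ → ℝ} {a : ℕ → ℂ}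

lemma l_pos (hmono : StrictMono l) (hpos : 0 < l 0) (n : ℕ) : 0 < l n :=
  lt_of_lt_of_le hpos (hmono.monotone (Nat.zero_le n))

lemma dl_pos (hmono : StrictMono l) (hpos : 0 < l 0) (n : ℕ) : 0 < dl l n := by
  unfold dl
  split
  · simpa [*] using hpos
  · have : l (n - 1) < l n := hmono (by omega)
    linarith

lemma Bmat_norm_le (hmono : StrictMono l) (hpos : 0 < l 0) (n k : ℕ) :
    ‖Bmat l a n k‖ ≤ l n / dl l n * ‖a n‖ := by
  have hln := l_pos hmono hpos n
  have hdn := dl_pos hmono hpos n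
  unfold Bmat
  split
  · rename_i h
    have hlk : 0 < l k := l_pos hmono hpos k
    have hlkn : l k ≤ l n := hmono.monotone h.2
    rw [norm_mul, norm_div, norm_mul, norm_pow, norm_neg, norm_one, one_pow, one_mul,
      Complex.norm_real, Complex.norm_real, Real.norm_eq_abs, Real.norm_eq_abs,
      abs_of_pos hlk, abs_of_pos hdn]
    gcongr
  · rw [norm_zero]; positivity

lemma cm_norm_le (hmono : StrictMono l) (hpos : 0 < l 0) (n k : ℕ) :
    ‖cm l a n k‖ ≤ 2 * (l n / dl l n * ‖a n‖) := by
  have h1 := Bmat_norm_le (a := a) hmono hpos n k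
  have h2 := Bmat_norm_le (a := a) hmono hpos n (k - 1)
  have h0 : (0:ℝ) ≤ l n / dl l n * ‖a n‖ := le_trans (norm_nonneg _) h1
  unfold cm
  calc ‖Bmat l a n k - (if k = 0 then 0 else Bmat l a n (k - 1))‖
      ≤ ‖Bmat l a n k‖ + ‖(if k = 0 then 0 else Bmat l a n (k - 1))‖ := norm_sub_le _ _
    _ ≤ _ := by
        split
        · simp only [norm_zero]; linarith
        · linarith

lemma cm_eq_zero (n k : ℕ) (h : k + 1 < n ∨ n + 1 < k) : cm l a n k = 0 := by
  unfold cm Bmat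
  rw [if_neg (by omega)]
  split
  · simp
  · rw [if_neg (by omega)]; simp

lemma cm_diag (n : ℕ) :
    cm l a n n = (((l n + (if n = 0 then 0 else l (n - 1))) / dl l n : ℝ) : ℂ) * a n := by
  unfold cm Bmat
  rcases Nat.eq_zero_or_pos n with h | h
  · subst h; norm_num
  · simp only [if_neg (show ¬ n = 0 by omega)]
    rw [if_pos (show n ≤ n + 1 ∧ n ≤ n by omega),
      if_pos (show n ≤ (n - 1) + 1 ∧ n - 1 ≤ n by omega)]
    have h1 : n - n = 0 := by omega
    have h2 : n - (n - 1) = 1 := by omega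
    rw [h1, h2]
    push_cast
    ring

lemma cm_diag_norm (hmono : StrictMono l) (hpos : 0 < l 0) (n : ℕ) :
    l n / dl l n * ‖a n‖ ≤ ‖cm l a n n‖ := by
  have hln := l_pos hmono hpos n
  have hdn := dl_pos hmono hpos n
  rw [cm_diag, norm_mul, Complex.norm_real, Real.norm_eq_abs]
  have hlp : (0:ℝ) ≤ (if n = 0 then 0 else l (n - 1)) := by
    split
    · exact le_rfl
    · exact le_of_lt (l_pos hmono hpos _)
  rw [abs_of_nonneg (div_nonneg (by linarith) hdn.le)]
  gcongr
  linarith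

lemma lam_mul (hmono : StrictMono l) (hpos : 0 < l 0) (x : ℕ → ℂ) (n : ℕ) :
    (l n : ℂ) * LamT l x n = ∑ k ∈ Finset.range (n + 1), ((dl l k : ℝ) : ℂ) * x k := by
  have h : (l n : ℂ) ≠ 0 := Complex.ofReal_ne_zero.2 (l_pos hmono hpos n).ne'
  unfold LamT
  field_simp

lemma LamT_inv (hmono : StrictMono l) (hpos : 0 < l 0) (G x : ℕ → ℂ)
    (hx : ∀ n, ((dl l n : ℝ) : ℂ) * x n
      = (l n : ℂ) * G n - (if n = 0 then 0 else (l (n - 1) : ℂ) * G (n - 1))) (n : ℕ) :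
    LamT l x n = G n := by
  have hsum : ∀ m, ∑ k ∈ Finset.range (m + 1), ((dl l k : ℝ) : ℂ) * x k = (l m : ℂ) * G m := by
    intro m
    induction m with
    | zero => rw [Finset.sum_range_one, hx 0, if_pos rfl, sub_zero]
    | succ j ih =>
        rw [Finset.sum_range_succ, ih, hx (j + 1), if_neg (by omega)]
        simp only [Nat.add_sub_cancel]
        ring
  have h : (l n : ℂ) ≠ 0 := Complex.ofReal_ne_zero.2 (l_pos hmono hpos n).ne'
  unfold LamT
  rw [hsum n]
  field_simp

lemma exists_delta {s : ℕ → ℝ} (hs : ∀ j, 0 ≤ s j) (hns : ¬ Summable s) :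
    ∃ δ : ℕ → ℝ, (∀ j, 0 ≤ δ j) ∧ Antitone δ ∧ Tendsto δ atTop (𝓝 0) ∧
      ¬ Summable (fun j => s j * δ j) := by
  set S : ℕ → ℝ := fun m => ∑ j ∈ Finset.range m, s j with hSdef
  have hSn : ∀ m, 0 ≤ S m := fun m => Finset.sum_nonneg fun i _ => hs i
  have hSmono : Monotone S := fun m m' h =>
    Finset.sum_le_sum_of_subset_of_nonneg (Finset.range_subset_range.2 h) fun i _ _ => hs i
  have hStop : Tendsto (fun m => S m) atTop atTop := by
    have h1 := mt (summable_iff_not_tendsto_nat_atTop_of_nonneg hs).2 hns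
    rw [not_not] at h1
    exact h1
  have hsq : ∀ m, 0 < Real.sqrt (1 + S m) := fun m =>
    Real.sqrt_pos.2 (by have := hSn m; linarith)
  refine ⟨fun j => (Real.sqrt (1 + S (j + 1)))⁻¹, fun j => (inv_pos.2 (hsq _)).le, ?_, ?_, ?_⟩
  · intro i j hij
    exact inv_anti₀ (hsq _) (Real.sqrt_le_sqrt (by have := hSmono (by omega : i + 1 ≤ j + 1); linarith))
  · apply Filter.Tendsto.inv_tendsto_atTop
    apply tendsto_atTop_atTop.2
    intro b
    rcases tendsto_atTop_atTop.1 hStop (b ^ 2) with ⟨N, hN⟩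
    refine ⟨N, fun m hm => ?_⟩
    have h1 : b ^ 2 ≤ 1 + S (m + 1) := by have := hN (m + 1) (by omega); linarith
    calc b ≤ |b| := le_abs_self b
      _ = Real.sqrt (b ^ 2) := (Real.sqrt_sq_eq_abs b).symm
      _ ≤ _ := Real.sqrt_le_sqrt h1
  · intro hsum
    have key : ∀ m, Real.sqrt (1 + S m) - 1 ≤
        ∑ j ∈ Finset.range m, s j * (Real.sqrt (1 + S (j + 1)))⁻¹ := by
      intro m
      induction m with
      | zero => simp [hSdef]
      | succ j ih =>
          rw [Finset.sum_range_succ]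
          have hstep : Real.sqrt (1 + S (j + 1)) - Real.sqrt (1 + S j) ≤
              s j * (Real.sqrt (1 + S (j + 1)))⁻¹ := by
            have hA := hsq j
            have hB := hsq (j + 1)
            have hAB : Real.sqrt (1 + S j) ≤ Real.sqrt (1 + S (j + 1)) :=
              Real.sqrt_le_sqrt (by have := hSmono (by omega : j ≤ j + 1); linarith)
            have hA2 : Real.sqrt (1 + S j) ^ 2 = 1 + S j :=
              Real.sq_sqrt (by have := hSn j; linarith)
            have hB2 : Real.sqrt (1 + S (j + 1)) ^ 2 = 1 + S (j + 1) :=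
              Real.sq_sqrt (by have := hSn (j + 1); linarith)
            have hSj : S (j + 1) = S j + s j := Finset.sum_range_succ _ _
            rw [show s j * (Real.sqrt (1 + S (j + 1)))⁻¹ = s j / Real.sqrt (1 + S (j + 1)) from
              (div_eq_mul_inv _ _).symm, le_div_iff₀ hB]
            nlinarith [mul_nonneg (sub_nonneg.2 hAB) hA.le]
          linarith
    have hb : ∀ m, ∑ j ∈ Finset.range m, s j * (Real.sqrt (1 + S (j + 1)))⁻¹ ≤
        ∑' j, s j * (Real.sqrt (1 + S (j + 1)))⁻¹ :=
      fun m => Summable.sum_le_tsum _ (fun i _ => mul_nonneg (hs i) (inv_pos.2 (hsq _)).le) hsum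
    have : Tendsto (fun m => Real.sqrt (1 + S m) - 1) atTop atTop := by
      apply tendsto_atTop_atTop.2
      intro b
      rcases tendsto_atTop_atTop.1 hStop ((b + 1) ^ 2) with ⟨N, hN⟩
      refine ⟨N, fun m hm => ?_⟩
      have h1 : (b + 1) ^ 2 ≤ 1 + S m := by have := hN m hm; linarith
      have : b + 1 ≤ Real.sqrt (1 + S m) :=
        le_trans (le_abs_self _) (by rw [← Real.sqrt_sq_eq_abs]; exact Real.sqrt_le_sqrt h1)
      linarith
    rcases tendsto_atTop_atTop.1 this ((∑' j, s j * (Real.sqrt (1 + S (j + 1)))⁻¹) + 1) with ⟨N, hN⟩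
    have := le_trans (le_trans (hN N le_rfl) (key N)) (hb N)
    linarith

lemma summable_t (hmono : StrictMono l) (hpos : 0 < l 0)
    (hyp : ∀ x ∈ csLam l, Summable fun k => ‖a k * x k‖) :
    Summable (fun n => l n / dl l n * ‖a n‖) := by
  set t : ℕ → ℝ := fun n => l n / dl l n * ‖a n‖ with ht
  have htn : ∀ n, 0 ≤ t n := fun n =>
    mul_nonneg (div_nonneg (l_pos hmono hpos n).le (dl_pos hmono hpos n).le) (norm_nonneg _)
  by_contra hns
  have hpar : ∃ p, p ≤ 1 ∧ ¬ Summable (fun j => t (2 * j + p)) := by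
    by_contra h
    push_neg at h
    have he : Summable (fun j : ℕ => t (2 * j)) := by
      simpa using h 0 (by omega)
    have ho := h 1 le_rfl
    exact hns (he.even_add_odd ho)
  obtain ⟨p, hp, hnsp⟩ := hpar
  obtain ⟨δ, hδ0, hδa, hδl, hδns⟩ := exists_delta (fun j => htn _) hnsp
  set Gr : ℕ → ℝ := fun n => if n % 2 = p then (-1 : ℝ) ^ (n / 2) * δ (n / 2) else 0 with hGr
  set G : ℕ → ℂ := fun n => ((Gr n : ℝ) : ℂ) with hG
  set x : ℕ → ℂ := fun n =>
    ((l n : ℂ) * G n - (if n = 0 then 0 else (l (n - 1) : ℂ) * G (n - 1))) / ((dl l n : ℝ) : ℂ)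
    with hxdef
  have hdl : ∀ n, ((dl l n : ℝ) : ℂ) ≠ 0 := fun n =>
    Complex.ofReal_ne_zero.2 (dl_pos hmono hpos n).ne'
  have hx : ∀ n, ((dl l n : ℝ) : ℂ) * x n
      = (l n : ℂ) * G n - (if n = 0 then 0 else (l (n - 1) : ℂ) * G (n - 1)) := by
    intro n
    rw [hxdef]
    rw [mul_div_assoc']
    exact mul_div_cancel_left₀ _ (hdl n)
  have hLam : ∀ n, LamT l x n = G n := LamT_inv hmono hpos G x hx
  obtain ⟨L, hL⟩ := hδa.tendsto_alternating_series_of_tendsto_zero hδl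
  have hGsum : ∀ m, ∑ n ∈ Finset.range m, G n
      = ((∑ j ∈ Finset.range ((m + 1 - p) / 2), (-1 : ℝ) ^ j * δ j : ℝ) : ℂ) := by
    intro m
    induction m with
    | zero => rw [show (0 + 1 - p) / 2 = 0 by omega]; simp
    | succ m ih =>
        rw [Finset.sum_range_succ, ih]
        by_cases hm : m % 2 = p
        · have h1 : (m + 1 + 1 - p) / 2 = (m + 1 - p) / 2 + 1 := by omega
          have h2 : (m + 1 - p) / 2 = m / 2 := by omega
          have hGm : G m = (((-1 : ℝ) ^ (m / 2) * δ (m / 2) : ℝ) : ℂ) := by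
            simp only [hG, hGr, if_pos hm]
          rw [h1, Finset.sum_range_succ, h2, hGm]
          push_cast
          ring
        · have h1 : (m + 1 + 1 - p) / 2 = (m + 1 - p) / 2 := by omega
          have hGm : G m = 0 := by
            simp only [hG, hGr, if_neg hm, Complex.ofReal_zero]
          rw [h1, hGm, add_zero]
  have hmem : x ∈ csLam l := by
    refine ⟨(L : ℂ), ?_⟩
    have hJ : Tendsto (fun m : ℕ => (m + 1 + 1 - p) / 2) atTop atTop :=
      tendsto_atTop_atTop.2 fun b => ⟨2 * b + 2, fun m hm => by omega⟩
    have hT := (Complex.continuous_ofReal.tendsto L).comp (hL.comp hJ)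
    apply hT.congr
    intro m
    simp only [Function.comp]
    rw [← hGsum (m + 1)]
    exact (Finset.sum_congr rfl fun n _ => hLam n).symm
  have hsb := hyp x hmem
  have hinj : Function.Injective (fun j : ℕ => 2 * j + p) := fun j1 j2 h => by
    simp only at h; omega
  have hsubs : Summable (fun j => ‖a (2 * j + p) * x (2 * j + p)‖) := hsb.comp_injective hinj
  apply hδns
  apply hsubs.congr
  intro j
  have hn2 : (2 * j + p) % 2 = p := by omega
  have hnd : (2 * j + p) / 2 = j := by omega
  have hGn : G (2 * j + p) = (((-1 : ℝ) ^ j * δ j : ℝ) : ℂ) := by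
    simp only [hG, hGr, if_pos hn2, hnd]
  have hz : (if 2 * j + p = 0 then 0 else (l (2 * j + p - 1) : ℂ) * G (2 * j + p - 1)) = 0 := by
    split
    · rfl
    · have hne : ¬ ((2 * j + p - 1) % 2 = p) := by omega
      simp [hG, hGr, if_neg hne]
  have hxn : x (2 * j + p) = (l (2 * j + p) : ℂ) * G (2 * j + p) / ((dl l (2 * j + p) : ℝ) : ℂ) := by
    rw [hxdef]
    simp only
    rw [hz, sub_zero]
  rw [hxn, hGn,
    show (l (2 * j + p) : ℂ) * (((-1 : ℝ) ^ j * δ j : ℝ) : ℂ) / ((dl l (2 * j + p) : ℝ) : ℂ)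
      = ((l (2 * j + p) * ((-1 : ℝ) ^ j * δ j) / dl l (2 * j + p) : ℝ) : ℂ) by
        push_cast; ring]
  rw [norm_mul, Complex.norm_real, Real.norm_eq_abs, abs_div, abs_mul, abs_mul, abs_pow,
    abs_neg, abs_one, one_pow, one_mul, abs_of_pos (l_pos hmono hpos _),
    abs_of_pos (dl_pos hmono hpos _), abs_of_nonneg (hδ0 j)]
  ring

lemma forward_bound (hmono : StrictMono l) (hpos : 0 < l 0)
    (hsum : Summable (fun n => l n / dl l n * ‖a n‖)) (N K : Finset ℕ) :
    ‖∑ n ∈ N, ∑ k ∈ K, cm l a n k‖ ≤ 6 * ∑' n, l n / dl l n * ‖a n‖ := by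
  set t : ℕ → ℝ := fun n => l n / dl l n * ‖a n‖ with ht
  have htn : ∀ n, 0 ≤ t n := fun n =>
    mul_nonneg (div_nonneg (l_pos hmono hpos n).le (dl_pos hmono hpos n).le) (norm_nonneg _)
  have inner : ∀ n, ‖∑ k ∈ K, cm l a n k‖ ≤ 6 * t n := by
    intro n
    have h2 : ∑ k ∈ K, ‖cm l a n k‖ = ∑ k ∈ K ∩ {n - 1, n, n + 1}, ‖cm l a n k‖ := by
      refine (Finset.sum_subset Finset.inter_subset_left ?_).symm
      intro k hk hk'
      have hz : k + 1 < n ∨ n + 1 < k := by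
        simp only [Finset.mem_inter, Finset.mem_insert, Finset.mem_singleton, hk, true_and,
          not_or] at hk'
        omega
      rw [cm_eq_zero n k hz, norm_zero]
    have h3 : ∑ k ∈ K ∩ {n - 1, n, n + 1}, ‖cm l a n k‖ ≤
        ∑ k ∈ ({n - 1, n, n + 1} : Finset ℕ), ‖cm l a n k‖ :=
      Finset.sum_le_sum_of_subset_of_nonneg Finset.inter_subset_right fun i _ _ => norm_nonneg _
    have h4 : ∑ k ∈ ({n - 1, n, n + 1} : Finset ℕ), ‖cm l a n k‖ ≤
        ∑ _k ∈ ({n - 1, n, n + 1} : Finset ℕ), 2 * t n :=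
      Finset.sum_le_sum fun k _ => cm_norm_le hmono hpos n k
    have hcard : (({n - 1, n, n + 1} : Finset ℕ).card : ℝ) ≤ 3 := by
      have c1 := Finset.card_insert_le (n - 1) ({n, n + 1} : Finset ℕ)
      have c2 := Finset.card_insert_le n ({n + 1} : Finset ℕ)
      simp only [Finset.card_singleton] at c1 c2
      have : ({n - 1, n, n + 1} : Finset ℕ).card ≤ 3 := by omega
      exact_mod_cast this
    have h5 : ∑ _k ∈ ({n - 1, n, n + 1} : Finset ℕ), 2 * t n ≤ 3 * (2 * t n) := by
      rw [Finset.sum_const, nsmul_eq_mul]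
      have := htn n
      nlinarith [hcard, Nat.cast_nonneg (α := ℝ) ({n - 1, n, n + 1} : Finset ℕ).card]
    calc ‖∑ k ∈ K, cm l a n k‖ ≤ ∑ k ∈ K, ‖cm l a n k‖ := norm_sum_le _ _
      _ ≤ 3 * (2 * t n) := by rw [h2]; linarith
      _ = 6 * t n := by ring
  calc ‖∑ n ∈ N, ∑ k ∈ K, cm l a n k‖ ≤ ∑ n ∈ N, ‖∑ k ∈ K, cm l a n k‖ := norm_sum_le _ _
    _ ≤ ∑ n ∈ N, 6 * t n := Finset.sum_le_sum fun n _ => inner n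
    _ = 6 * ∑ n ∈ N, t n := by rw [Finset.mul_sum]
    _ ≤ 6 * ∑' n, t n := by
        have := Summable.sum_le_tsum N (fun i _ => htn i) hsum
        linarith

lemma summable_norm_of_subsums {w : ℕ → ℂ} {C : ℝ} (h : ∀ J : Finset ℕ, ‖∑ j ∈ J, w j‖ ≤ C) :
    Summable (fun j => ‖w j‖) := by
  have habs : ∀ J : Finset ℕ, ∑ j ∈ J, ‖w j‖ ≤ 4 * C := by
    intro J
    have hkey : ∀ f : ℂ → ℝ, (∀ z, |f z| ≤ ‖z‖) → (∀ s : Finset ℕ, f (∑ j ∈ s, w j) = ∑ j ∈ s, f (w j)) →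
        ∑ j ∈ J, |f (w j)| ≤ 2 * C := by
      intro f hf hadd
      have hsplit := Finset.sum_filter_add_sum_filter_not J (fun j => 0 ≤ f (w j))
        (fun j => |f (w j)|)
      have e1 : ∑ j ∈ J.filter (fun j => 0 ≤ f (w j)), |f (w j)|
          = f (∑ j ∈ J.filter (fun j => 0 ≤ f (w j)), w j) := by
        rw [hadd]
        exact Finset.sum_congr rfl fun j hj => abs_of_nonneg (Finset.mem_filter.1 hj).2
      have e2 : ∑ j ∈ J.filter (fun j => ¬ 0 ≤ f (w j)), |f (w j)|
          = - f (∑ j ∈ J.filter (fun j => ¬ 0 ≤ f (w j)), w j) := by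
        rw [hadd, ← Finset.sum_neg_distrib]
        exact Finset.sum_congr rfl fun j hj =>
          abs_of_neg (lt_of_not_ge (Finset.mem_filter.1 hj).2)
      have b1 : f (∑ j ∈ J.filter (fun j => 0 ≤ f (w j)), w j) ≤ C :=
        le_trans (le_trans (le_abs_self _) (hf _)) (h _)
      have b2 : - f (∑ j ∈ J.filter (fun j => ¬ 0 ≤ f (w j)), w j) ≤ C :=
        le_trans (le_trans (neg_le_abs _) (hf _)) (h _)
      linarith [hsplit.symm, e1, e2, b1, b2]
    have hre := hkey Complex.re (fun z => Complex.abs_re_le_norm z) (fun s => Complex.re_sum s w)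
    have him := hkey Complex.im (fun z => Complex.abs_im_le_norm z) (fun s => Complex.im_sum s w)
    have hnorm : ∀ j, ‖w j‖ ≤ |(w j).re| + |(w j).im| := fun j => Complex.norm_le_abs_re_add_abs_im _
    calc ∑ j ∈ J, ‖w j‖ ≤ ∑ j ∈ J, (|(w j).re| + |(w j).im|) := Finset.sum_le_sum fun j _ => hnorm j
      _ = ∑ j ∈ J, |(w j).re| + ∑ j ∈ J, |(w j).im| := Finset.sum_add_distrib
      _ ≤ 4 * C := by linarith
  exact summable_of_sum_range_le (fun n => norm_nonneg _) fun m => habs (Finset.range m)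

lemma summable_t_of_bound (hmono : StrictMono l) (hpos : 0 < l 0) {C : ℝ}
    (h : ∀ N K : Finset ℕ, ‖∑ n ∈ N, ∑ k ∈ K, cm l a n k‖ ≤ C) :
    Summable (fun n => l n / dl l n * ‖a n‖) := by
  have hdiag : ∀ p, p ≤ 1 → Summable (fun j => ‖cm l a (2 * j + p) (2 * j + p)‖) := by
    intro p hp
    apply summable_norm_of_subsums (C := C)
    intro J
    have hinj : ∀ x ∈ J, ∀ y ∈ J, 2 * x + p = 2 * y + p → x = y := fun x _ y _ hxy => by omega
    have hNN := h (J.image fun j => 2 * j + p) (J.image fun j => 2 * j + p)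
    have hstep : ∑ n ∈ J.image (fun j => 2 * j + p), ∑ k ∈ J.image (fun j => 2 * j + p), cm l a n k
        = ∑ j ∈ J, cm l a (2 * j + p) (2 * j + p) := by
      rw [Finset.sum_image hinj]
      refine Finset.sum_congr rfl fun j hj => ?_
      apply Finset.sum_eq_single_of_mem (2 * j + p)
        (Finset.mem_image_of_mem (fun j => 2 * j + p) hj)
      intro k hk hkn
      obtain ⟨i, _, rfl⟩ := Finset.mem_image.1 hk
      exact cm_eq_zero _ _ (by omega)
    rw [hstep] at hNN
    exact hNN
  have h0 : Summable (fun j : ℕ => ‖cm l a (2 * j) (2 * j)‖) := by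
    simpa using hdiag 0 (by omega)
  have h1 := hdiag 1 le_rfl
  have hall : Summable (fun n => ‖cm l a n n‖) := h0.even_add_odd h1
  refine hall.of_nonneg_of_le (fun n =>
    mul_nonneg (div_nonneg (l_pos hmono hpos n).le (dl_pos hmono hpos n).le) (norm_nonneg _))
    (fun n => cm_diag_norm hmono hpos n)

lemma alpha_of_summable_t (hmono : StrictMono l) (hpos : 0 < l 0)
    (hsum : Summable (fun n => l n / dl l n * ‖a n‖)) :
    ∀ x ∈ csLam l, Summable fun k => ‖a k * x k‖ := by
  intro x hx
  obtain ⟨L, hL⟩ := hx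
  obtain ⟨M, hM⟩ : ∃ M, ∀ m, ‖∑ n ∈ Finset.range (m + 1), LamT l x n‖ ≤ M := by
    obtain ⟨M, hM⟩ := hL.norm.bddAbove_range
    exact ⟨M, fun m => hM ⟨m, rfl⟩⟩
  have hM0 : 0 ≤ M := le_trans (norm_nonneg _) (hM 0)
  have hΛ : ∀ n, ‖LamT l x n‖ ≤ 2 * M := by
    intro n
    match n with
    | 0 =>
        have := hM 0
        rw [Finset.sum_range_one] at this
        linarith
    | Nat.succ j =>
        have h1 := hM (j + 1)
        have h2 := hM j
        have e : LamT l x (j + 1) = ∑ n ∈ Finset.range (j + 1 + 1), LamT l x n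
            - ∑ n ∈ Finset.range (j + 1), LamT l x n := by
          rw [Finset.sum_range_succ]; ring
        rw [e]
        calc ‖_ - _‖ ≤ _ + _ := norm_sub_le _ _
          _ ≤ 2 * M := by linarith
  have hQ : ∀ m, ‖∑ k ∈ Finset.range (m + 1), ((dl l k : ℝ) : ℂ) * x k‖ ≤ 2 * M * l m := by
    intro m
    rw [← lam_mul hmono hpos x m, norm_mul, Complex.norm_real, Real.norm_eq_abs,
      abs_of_pos (l_pos hmono hpos m)]
    calc l m * ‖LamT l x m‖ ≤ l m * (2 * M) :=
          mul_le_mul_of_nonneg_left (hΛ m) (l_pos hmono hpos m).le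
      _ = 2 * M * l m := by ring
  have hx4 : ∀ n, ‖a n * x n‖ ≤ 4 * M * (l n / dl l n * ‖a n‖) := by
    intro n
    have hdn := dl_pos hmono hpos n
    have hln := l_pos hmono hpos n
    have hdx : ‖((dl l n : ℝ) : ℂ) * x n‖ ≤ 4 * M * l n := by
      match n with
      | 0 =>
          have := hQ 0
          rw [Finset.sum_range_one] at this
          have : ‖((dl l 0 : ℝ) : ℂ) * x 0‖ ≤ 2 * M * l 0 := this
          nlinarith [l_pos hmono hpos 0, hM0]
      | Nat.succ j =>
          have h1 := hQ (j + 1)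
          have h2 := hQ j
          have e : ((dl l (j + 1) : ℝ) : ℂ) * x (j + 1)
              = ∑ k ∈ Finset.range (j + 1 + 1), ((dl l k : ℝ) : ℂ) * x k
              - ∑ k ∈ Finset.range (j + 1), ((dl l k : ℝ) : ℂ) * x k := by
            rw [Finset.sum_range_succ]; ring
          have hlj : l j ≤ l (j + 1) := (hmono (by omega : j < j + 1)).le
          rw [e]
          calc ‖_ - _‖ ≤ _ + _ := norm_sub_le _ _
            _ ≤ 4 * M * l (j + 1) := by nlinarith [hM0]
    have hxn : ‖x n‖ ≤ 4 * M * l n / dl l n := by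
      rw [norm_mul, Complex.norm_real, Real.norm_eq_abs, abs_of_pos hdn] at hdx
      rw [le_div_iff₀ hdn]
      linarith [hdx]
    calc ‖a n * x n‖ = ‖a n‖ * ‖x n‖ := norm_mul _ _
      _ ≤ ‖a n‖ * (4 * M * l n / dl l n) :=
          mul_le_mul_of_nonneg_left hxn (norm_nonneg _)
      _ = 4 * M * (l n / dl l n * ‖a n‖) := by ring
  exact (hsum.mul_left (4 * M)).of_nonneg_of_le (fun n => norm_nonneg _) hx4

theorem stmt12 (l : ℕ → ℝ) (hmono : StrictMono l) (hpos : 0 < l 0)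
    (hlim : Tendsto l atTop atTop) (a : ℕ → ℂ) :
    (∀ x ∈ csLam l, Summable fun k => ‖a k * x k‖) ↔
    (∃ C : ℝ, ∀ N K : Finset ℕ,
      ‖∑ n ∈ N, ∑ k ∈ K,
        (Bmat l a n k - (if k = 0 then 0 else Bmat l a n (k - 1)))‖ ≤ C) := by
  constructor
  · intro hyp
    exact ⟨6 * ∑' n, l n / dl l n * ‖a n‖,
      fun N K => forward_bound hmono hpos (summable_t hmono hpos hyp) N K⟩
  · rintro ⟨C, hC⟩
    exact alpha_of_summable_t hmono hpos (summable_t_of_bound hmono hpos hC)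
end

section
/- A sequence a : ℕ → ℂ belongs to the β-dual of cs^λ, and equivalently to the β-dual of cs₀^λ (i.e. the series ∑_k a_k·x_k converges for every x in the respective space), if and only if both: (1) ∑_{k=0}^∞ |ã_k − ã_{k+1}| < ∞, and (2) sup_k |λ_k·a_k/(λ_k − λ_{k−1})| < ∞, where ã_k = (a_k/(λ_k − λ_{k−1}) − a_{k+1}/(λ_{k+1} − λ_k))·λ_k. -/
open Filter Topology

/-- `ã_k = (a_k/(λ_k - λ_{k-1}) - a_{k+1}/(λ_{k+1} - λ_k)) λ_k`. -/
noncomputable def atil (l : ℕ → ℝ) (a : ℕ → ℂ) (k : ℕ) : ℂ :=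
  (a k / ((dl l k : ℝ) : ℂ) - a (k + 1) / ((dl l (k + 1) : ℝ) : ℂ)) * (l k : ℂ)

lemma lpos {l : ℕ → ℝ} (hmono : StrictMono l) (hpos : 0 < l 0) : ∀ k, 0 < l k :=
  fun k => lt_of_lt_of_le hpos (hmono.monotone (Nat.zero_le k))

lemma dlpos {l : ℕ → ℝ} (hmono : StrictMono l) (hpos : 0 < l 0) : ∀ k, 0 < dl l k := by
  intro k
  unfold dl
  cases k with
  | zero => simpa using hpos
  | succ n => simp only [Nat.succ_ne_zero, if_false, Nat.add_sub_cancel, sub_pos]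
              exact hmono (Nat.lt_succ_self n)

lemma lne {l : ℕ → ℝ} (hmono : StrictMono l) (hpos : 0 < l 0) (k : ℕ) : ((l k : ℂ)) ≠ 0 := by
  exact_mod_cast (ne_of_gt (lpos hmono hpos k))

lemma dlne {l : ℕ → ℝ} (hmono : StrictMono l) (hpos : 0 < l 0) (k : ℕ) :
    ((dl l k : ℝ) : ℂ) ≠ 0 := by
  exact_mod_cast (ne_of_gt (dlpos hmono hpos k))

lemma lam_step {l : ℕ → ℝ} (hmono : StrictMono l) (hpos : 0 < l 0) (x : ℕ → ℂ) (m : ℕ) :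
    (l (m+1) : ℂ) * LamT l x (m+1) - (l m : ℂ) * LamT l x m
      = ((dl l (m+1) : ℝ) : ℂ) * x (m+1) := by
  unfold LamT
  rw [Finset.sum_range_succ (n := m+1)]
  have h1 := lne hmono hpos m
  have h2 := lne hmono hpos (m+1)
  field_simp
  ring

lemma abelA {l : ℕ → ℝ} (hmono : StrictMono l) (hpos : 0 < l 0) (a x : ℕ → ℂ) (m : ℕ) :
    ∑ k ∈ Finset.range (m+1), a k * x k
      = (∑ k ∈ Finset.range m, atil l a k * LamT l x k)
        + ((l m : ℂ) * a m / ((dl l m : ℝ) : ℂ)) * LamT l x m := by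
  induction m with
  | zero =>
      have h1 := lne hmono hpos 0
      have h2 := dlne hmono hpos 0
      simp [LamT, atil]
      field_simp
  | succ n ih =>
      rw [Finset.sum_range_succ (n := n+1), ih, Finset.sum_range_succ (n := n)]
      have hstep := lam_step hmono hpos x n
      have h1 : (l (n+1) : ℂ) * LamT l x (n+1) = (l n : ℂ) * LamT l x n + ((dl l (n+1) : ℝ) : ℂ) * x (n+1) := by
        linear_combination hstep
      have hd1 := dlne hmono hpos n
      have hd2 := dlne hmono hpos (n+1)
      have : a (n+1) * x (n+1)
          = atil l a n * LamT l x n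
            + ((l (n+1) : ℂ) * a (n+1) / ((dl l (n+1) : ℝ) : ℂ)) * LamT l x (n+1)
            - ((l n : ℂ) * a n / ((dl l n : ℝ) : ℂ)) * LamT l x n := by
        unfold atil
        field_simp
        linear_combination (-(a (n+1) * ((dl l n : ℝ):ℂ))) * h1
      linear_combination this

lemma abelB (u t : ℕ → ℂ) (N : ℕ) :
    ∑ k ∈ Finset.range (N+1), u k * t k
      = (∑ k ∈ Finset.range N, (u k - u (k+1)) * (∑ j ∈ Finset.range (k+1), t j))
        + u N * ∑ j ∈ Finset.range (N+1), t j := by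
  induction N with
  | zero => simp
  | succ n ih =>
      rw [Finset.sum_range_succ (n := n+1) (f := fun k => u k * t k), ih,
        Finset.sum_range_succ (n := n) (f := fun k => (u k - u (k+1)) * (∑ j ∈ Finset.range (k+1), t j)),
        Finset.sum_range_succ (f := t) (n := n+1)]
      ring

noncomputable def xOf (l : ℕ → ℝ) (t : ℕ → ℂ) (k : ℕ) : ℂ :=
  ((l k : ℂ) * t k - (if k = 0 then 0 else (l (k-1) : ℂ) * t (k-1))) / ((dl l k : ℝ) : ℂ)

lemma LamT_xOf {l : ℕ → ℝ} (hmono : StrictMono l) (hpos : 0 < l 0) (t : ℕ → ℂ) (n : ℕ) :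
    LamT l (xOf l t) n = t n := by
  have key : ∀ n, ∑ k ∈ Finset.range (n+1), ((dl l k : ℝ) : ℂ) * xOf l t k = (l n : ℂ) * t n := by
    intro n
    induction n with
    | zero => simp [xOf, dlne hmono hpos 0, mul_div_cancel₀]
    | succ m ih =>
        rw [Finset.sum_range_succ, ih]
        unfold xOf
        rw [mul_div_cancel₀ _ (dlne hmono hpos (m+1))]
        simp [Nat.succ_ne_zero]
  unfold LamT
  rw [key n, one_div, inv_mul_cancel_left₀ (lne hmono hpos n)]

lemma telescope (S : ℕ → ℂ) (n : ℕ) :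
    ∑ k ∈ Finset.range (n+1), (S k - if k = 0 then 0 else S (k-1)) = S n := by
  induction n with
  | zero => simp
  | succ m ih => rw [Finset.sum_range_succ, ih]; simp [Nat.succ_ne_zero]

noncomputable def bco (l : ℕ → ℝ) (a : ℕ → ℂ) (k : ℕ) : ℂ :=
  (l k : ℂ) * a k / ((dl l k : ℝ) : ℂ)

lemma atil_eq_bco {l : ℕ → ℝ} (hmono : StrictMono l) (hpos : 0 < l 0) (a : ℕ → ℂ) (k : ℕ) :
    atil l a k = bco l a k - (((l k / l (k+1) : ℝ)) : ℂ) * bco l a (k+1) := by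
  unfold atil bco
  have h1 := lne hmono hpos (k+1)
  have h1' : (l (k+1) : ℝ) ≠ 0 := ne_of_gt (lpos hmono hpos (k+1))
  have h2 := dlne hmono hpos k
  have h3 := dlne hmono hpos (k+1)
  push_cast
  field_simp

lemma atil_norm_le {l : ℕ → ℝ} (hmono : StrictMono l) (hpos : 0 < l 0) (a : ℕ → ℂ) (k : ℕ) :
    ‖atil l a k‖ ≤ ‖bco l a k‖ + ‖bco l a (k+1)‖ := by
  rw [atil_eq_bco hmono hpos a k]
  refine (norm_sub_le _ _).trans ?_
  gcongr
  rw [norm_mul]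
  have h0 : 0 < l k := lpos hmono hpos k
  have h1 : l k ≤ l (k+1) := le_of_lt (hmono (Nat.lt_succ_self k))
  have : ‖(((l k / l (k+1) : ℝ)) : ℂ)‖ ≤ 1 := by
    rw [Complex.norm_real, Real.norm_eq_abs, abs_of_pos (div_pos h0 (lt_of_lt_of_le h0 h1))]
    exact div_le_one_of_le₀ h1 (le_of_lt (lt_of_lt_of_le h0 h1))
  calc ‖(((l k / l (k+1) : ℝ)) : ℂ)‖ * ‖bco l a (k+1)‖ ≤ 1 * ‖bco l a (k+1)‖ := by
        gcongr
    _ = ‖bco l a (k+1)‖ := one_mul _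

lemma P1 {l : ℕ → ℝ} (hmono : StrictMono l) (hpos : 0 < l 0) (a : ℕ → ℂ)
    (hsum : Summable fun k => ‖atil l a k - atil l a (k + 1)‖)
    (C : ℝ) (hC : ∀ k, ‖bco l a k‖ ≤ C) :
    ∀ x ∈ csLam l,
      ∃ L, Tendsto (fun m => ∑ k ∈ Finset.range (m + 1), a k * x k) atTop (𝓝 L) := by
  rintro x ⟨L, hS⟩
  set t : ℕ → ℂ := fun n => LamT l x n with ht
  set Sx : ℕ → ℂ := fun m => ∑ n ∈ Finset.range (m+1), t n with hSx
  -- Sx is bounded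
  obtain ⟨M, hM⟩ : ∃ M, ∀ n, ‖Sx n‖ ≤ M := by
    have hb : BddAbove (Set.range fun n => ‖Sx n‖) := (hS.norm).bddAbove_range
    rcases hb with ⟨M, hM⟩
    exact ⟨M, fun n => hM ⟨n, rfl⟩⟩
  -- absolute convergence of the main series
  have hsum2 : Summable fun k => (atil l a k - atil l a (k+1)) * Sx k := by
    refine Summable.of_norm (Summable.of_nonneg_of_le (fun k => norm_nonneg _)
      (fun k => ?_) (hsum.mul_right M))
    rw [norm_mul]
    exact mul_le_mul_of_nonneg_left (hM k) (norm_nonneg _)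
  obtain ⟨A, hA⟩ : ∃ A, Tendsto (fun N => ∑ k ∈ Finset.range N,
      (atil l a k - atil l a (k+1)) * Sx k) atTop (𝓝 A) :=
    ⟨_, hsum2.hasSum.tendsto_sum_nat⟩
  -- atil converges
  have hsum3 : Summable fun k => atil l a k - atil l a (k+1) := hsum.of_norm
  have hD : Tendsto (fun N => ∑ k ∈ Finset.range N, (atil l a k - atil l a (k+1)))
      atTop (𝓝 (∑' k, (atil l a k - atil l a (k+1)))) := hsum3.hasSum.tendsto_sum_nat
  set D := ∑' k, (atil l a k - atil l a (k+1)) with hDdef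
  have htel : ∀ N, ∑ k ∈ Finset.range N, (atil l a k - atil l a (k+1))
      = atil l a 0 - atil l a N := fun N => Finset.sum_range_sub' (atil l a) N
  have htl : Tendsto (fun N => atil l a N) atTop (𝓝 (atil l a 0 - D)) := by
    have : (fun N => atil l a N)
        = fun N => atil l a 0 - ∑ k ∈ Finset.range N, (atil l a k - atil l a (k+1)) := by
      funext N; rw [htel N]; ring
    rw [this]
    exact tendsto_const_nhds.sub hD
  have hmul : Tendsto (fun N => atil l a N * Sx N) atTop (𝓝 ((atil l a 0 - D) * L)) :=
    htl.mul hS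
  -- last term tends to 0
  have hdiff : Tendsto (fun N => Sx (N+1) - Sx N) atTop (𝓝 0) := by
    have := (hS.comp (tendsto_add_atTop_nat 1)).sub hS
    simpa using this
  have hlast : Tendsto (fun N => bco l a (N+1) * (Sx (N+1) - Sx N)) atTop (𝓝 0) := by
    refine squeeze_zero_norm (fun N => ?_) (a := fun N => C * ‖Sx (N+1) - Sx N‖) ?_
    · rw [norm_mul]
      exact mul_le_mul_of_nonneg_right (hC _) (norm_nonneg _)
    · have := (tendsto_norm_zero.comp hdiff).const_mul C
      simpa using this
  -- key identity
  have hts : ∀ N, t (N+1) = Sx (N+1) - Sx N := by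
    intro N
    simp [hSx, Finset.sum_range_succ]
  have key : ∀ N, ∑ k ∈ Finset.range (N+2), a k * x k
      = (∑ k ∈ Finset.range N, (atil l a k - atil l a (k+1)) * Sx k)
        + atil l a N * Sx N + bco l a (N+1) * (Sx (N+1) - Sx N) := by
    intro N
    rw [show N+2 = (N+1)+1 from rfl, abelA hmono hpos a x (N+1)]
    rw [show ((l (N+1) : ℂ) * a (N+1) / ((dl l (N+1) : ℝ) : ℂ)) = bco l a (N+1) from rfl]
    rw [show LamT l x (N+1) = t (N+1) from rfl, hts N]
    congr 1
    rw [abelB (atil l a) t N]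
  refine ⟨A + (atil l a 0 - D) * L + 0, ?_⟩
  have hcomp : Tendsto (fun N => ∑ k ∈ Finset.range (N+2), a k * x k) atTop
      (𝓝 (A + (atil l a 0 - D) * L + 0)) := by
    simp only [key]
    exact (hA.add hmul).add hlast
  exact (tendsto_add_atTop_iff_nat (f := fun m => ∑ k ∈ Finset.range (m+1), a k * x k) 1).mp hcomp

lemma step1 {l : ℕ → ℝ} (hmono : StrictMono l) (hpos : 0 < l 0) (a : ℕ → ℂ)
    (H : ∀ x ∈ cs0Lam l,
      ∃ L, Tendsto (fun m => ∑ k ∈ Finset.range (m + 1), a k * x k) atTop (𝓝 L)) :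
    ∃ C : ℝ, ∀ k, ‖bco l a k‖ ≤ C := by
  by_contra hc
  push_neg at hc
  have hbig : ∀ (C : ℝ) (N : ℕ), ∃ k, N < k ∧ C < ‖bco l a k‖ := by
    intro C N
    obtain ⟨k, hk⟩ := hc (max C (∑ j ∈ Finset.range (N+1), ‖bco l a j‖))
    refine ⟨k, ?_, lt_of_le_of_lt (le_max_left _ _) hk⟩
    by_contra hkN
    push_neg at hkN
    have h1 : ‖bco l a k‖ ≤ ∑ j ∈ Finset.range (N+1), ‖bco l a j‖ :=
      Finset.single_le_sum (fun j _ => norm_nonneg _)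
        (Finset.mem_range.mpr (Nat.lt_succ_of_le hkN))
    exact absurd hk (not_lt.mpr (h1.trans (le_max_right _ _)))
  choose f hf1 hf2 using hbig
  set m : ℕ → ℕ := fun j => Nat.rec (f 1 0) (fun j prev => f (((j:ℝ)+2)^2) (prev+2)) j with hm
  have hm0pos : 0 < m 0 := hf1 1 0
  have hmstep : ∀ j, m j + 2 < m (j+1) := fun j => hf1 (((j:ℝ)+2)^2) (m j + 2)
  have hmbig : ∀ j : ℕ, ((j:ℝ)+1)^2 < ‖bco l a (m j)‖ := by
    intro j
    cases j with
    | zero => show _ < ‖bco l a (f 1 0)‖; simpa using hf2 1 0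
    | succ n =>
        have := hf2 (((n:ℝ)+2)^2) (m n + 2)
        convert this using 2
        push_cast; ring
  have hsm : StrictMono m := strictMono_nat_of_lt_succ (fun j => by have := hmstep j; omega)
  have hgap : ∀ i j, i < j → m i + 3 ≤ m j := by
    intro i j hij
    have h1 : m i + 2 < m (i+1) := hmstep i
    have h2 : m (i+1) ≤ m j := hsm.monotone (Nat.succ_le_of_lt hij)
    omega
  have hm1 : ∀ j, 1 ≤ m j := fun j => le_trans hm0pos (hsm.monotone (Nat.zero_le j))
  -- the test sequence
  set S : ℕ → ℂ := fun n => ∑ j ∈ Finset.range (n+1),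
    if n = m j then ((1/((j:ℝ)+1) : ℝ) : ℂ) else 0 with hSdef
  have S_eval : ∀ i, S (m i) = ((1/((i:ℝ)+1) : ℝ) : ℂ) := by
    intro i
    simp only [hSdef]
    rw [Finset.sum_eq_single_of_mem i
      (Finset.mem_range.mpr (Nat.lt_succ_of_le hsm.le_apply))]
    · simp
    · intro j _ hji
      rw [if_neg (fun h => hji (hsm.injective h.symm))]
  have S_zero : ∀ n, (∀ i, n ≠ m i) → S n = 0 := by
    intro n hn
    exact Finset.sum_eq_zero (fun j _ => if_neg (hn j))
  have hS0 : Tendsto S atTop (𝓝 0) := by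
    rw [NormedAddCommGroup.tendsto_nhds_zero]
    intro ε hε
    obtain ⟨J, hJ⟩ := exists_nat_one_div_lt hε
    filter_upwards [eventually_ge_atTop (m J)] with n hn
    by_cases hcase : ∃ i, n = m i
    · obtain ⟨i, rfl⟩ := hcase
      have hiJ : J ≤ i := hsm.le_iff_le.mp hn
      rw [S_eval i, Complex.norm_real, Real.norm_eq_abs,
        abs_of_pos (by positivity)]
      calc 1/((i:ℝ)+1) ≤ 1/((J:ℝ)+1) := by
            apply one_div_le_one_div_of_le (by positivity)
            have : (J:ℝ) ≤ (i:ℝ) := Nat.cast_le.mpr hiJ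
            linarith
        _ < ε := hJ
    · push_neg at hcase
      rw [S_zero n hcase]
      simpa using hε
  set t : ℕ → ℂ := fun n => S n - if n = 0 then 0 else S (n-1) with htdef
  set x : ℕ → ℂ := xOf l t with hxdef
  have hx0 : x ∈ cs0Lam l := by
    have heq : (fun m => ∑ n ∈ Finset.range (m+1), LamT l x n) = S := by
      funext m
      rw [Finset.sum_congr rfl (fun n _ => LamT_xOf hmono hpos t n)]
      exact telescope S m
    unfold cs0Lam
    rw [Set.mem_setOf_eq, heq]
    exact hS0
  obtain ⟨L, hgL⟩ := H x hx0
  have hterm : Tendsto (fun n => a (n+1) * x (n+1)) atTop (𝓝 0) := by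
    have h2 := (hgL.comp (tendsto_add_atTop_nat 1)).sub hgL
    rw [sub_self] at h2
    refine h2.congr (fun n => ?_)
    simp [Function.comp, Finset.sum_range_succ]
  have hsub : Tendsto (fun j => a (m j) * x (m j)) atTop (𝓝 0) := by
    have hcomp : Tendsto (fun j => m j - 1) atTop atTop := by
      apply tendsto_atTop_mono (fun j => ?_) (tendsto_sub_atTop_nat 1)
      have : j ≤ m j := hsm.le_apply
      omega
    have heq : (fun j => a (m j) * x (m j))
        = (fun n => a (n+1) * x (n+1)) ∘ (fun j => m j - 1) := by
      funext j
      have h1 := hm1 j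
      simp only [Function.comp]
      rw [Nat.sub_add_cancel h1]
    rw [heq]
    exact hterm.comp hcomp
  -- compute values along the subsequence
  have hSm1 : ∀ j, S (m j - 1) = 0 := by
    intro j
    apply S_zero
    intro i hi
    have h1 := hm1 j
    rcases lt_trichotomy i j with h | rfl | h
    · have := hgap i j h; omega
    · omega
    · have := hsm h; omega
  have hSm2 : ∀ j, (if m j - 1 = 0 then (0:ℂ) else S (m j - 2)) = 0 := by
    intro j
    by_cases h0 : m j - 1 = 0
    · rw [if_pos h0]
    · rw [if_neg h0]
      apply S_zero
      intro i hi
      have h1 := hm1 j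
      rcases lt_trichotomy i j with h | rfl | h
      · have := hgap i j h; omega
      · omega
      · have := hsm h; omega
  have hval : ∀ j, a (m j) * x (m j) = bco l a (m j) * ((1/((j:ℝ)+1) : ℝ) : ℂ) := by
    intro j
    have h1 := hm1 j
    have hmj0 : m j ≠ 0 := by omega
    rw [hxdef]
    unfold xOf
    rw [if_neg hmj0, htdef]
    simp only
    rw [if_neg hmj0]
    have hpred : m j - 1 - 1 = m j - 2 := by omega
    rw [hpred, hSm1 j, S_eval j, hSm2 j]
    rw [bco]
    field_simp
    ring
  -- contradiction
  have hlow : ∀ j, (1:ℝ) ≤ ‖a (m j) * x (m j)‖ := by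
    intro j
    rw [hval j, norm_mul, Complex.norm_real, Real.norm_eq_abs,
      abs_of_pos (by positivity)]
    have hb := hmbig j
    have hj1 : (0:ℝ) < (j:ℝ)+1 := by positivity
    have key : ((j:ℝ)+1)^2 * (1/((j:ℝ)+1)) ≤ ‖bco l a (m j)‖ * (1/((j:ℝ)+1)) :=
      mul_le_mul_of_nonneg_right (le_of_lt hb) (by positivity)
    have h2 : ((j:ℝ)+1)^2 * (1/((j:ℝ)+1)) = (j:ℝ)+1 := by field_simp
    have h3 : (1:ℝ) ≤ (j:ℝ)+1 := by
      have := Nat.cast_nonneg (α := ℝ) j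
      linarith
    linarith
  have := (NormedAddCommGroup.tendsto_nhds_zero.mp hsub 1 one_pos).exists
  obtain ⟨j, hj⟩ := this
  exact absurd hj (not_lt.mpr (hlow j))

lemma step2 {l : ℕ → ℝ} (hmono : StrictMono l) (hpos : 0 < l 0) (a : ℕ → ℂ)
    (H : ∀ x ∈ cs0Lam l,
      ∃ L, Tendsto (fun m => ∑ k ∈ Finset.range (m + 1), a k * x k) atTop (𝓝 L))
    (C : ℝ) (hC : ∀ k, ‖bco l a k‖ ≤ C) :
    Summable fun k => ‖atil l a k - atil l a (k + 1)‖ := by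
  by_contra hns
  set c : ℕ → ℂ := fun k => atil l a k - atil l a (k+1) with hcdef
  set T : ℕ → ℝ := fun N => ∑ k ∈ Finset.range N, ‖c k‖ with hTdef
  have hT : Tendsto T atTop atTop := by
    by_contra hT'
    exact hns ((summable_iff_not_tendsto_nat_atTop_of_nonneg
      (fun k => norm_nonneg (c k))).mpr hT')
  have hTmono : Monotone T := fun i j hij =>
    Finset.sum_le_sum_of_subset_of_nonneg (Finset.range_subset_range.mpr hij)
      (fun k _ _ => norm_nonneg _)
  have hTnonneg : ∀ N, 0 ≤ T N := fun N => Finset.sum_nonneg (fun k _ => norm_nonneg _)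
  have hTk : ∀ k, ‖c k‖ ≤ T (k+1) := fun k =>
    Finset.single_le_sum (fun j _ => norm_nonneg _) (Finset.mem_range.mpr (Nat.lt_succ_self k))
  set S : ℕ → ℂ := fun k => if c k = 0 then 0
    else (starRingEnd ℂ) (c k) / (((‖c k‖ * T (k+1) : ℝ)):ℂ) with hSdef
  have hCS : ∀ k, c k * S k = ((‖c k‖ : ℝ) : ℂ) / ((T (k+1) : ℝ) : ℂ) := by
    intro k
    by_cases h : c k = 0
    · simp [hSdef, h]
    · rw [hSdef]
      simp only [if_neg h]
      have h1 : 0 < ‖c k‖ := norm_pos_iff.mpr h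
      have h2 : 0 < T (k+1) := lt_of_lt_of_le h1 (hTk k)
      have key : c k * (starRingEnd ℂ) (c k) = ((‖c k‖^2 : ℝ) : ℂ) := by
        rw [Complex.mul_conj]
        norm_cast
        rw [Complex.normSq_eq_norm_sq]
      rw [show ((‖c k‖ * T (k+1) : ℝ) : ℂ) = ((‖c k‖ : ℝ) : ℂ) * ((T (k+1) : ℝ) : ℂ) by push_cast; ring]
      rw [← mul_div_assoc, key]
      have hne1 : ((‖c k‖ : ℝ) : ℂ) ≠ 0 := by exact_mod_cast ne_of_gt h1
      have hne2 : ((T (k+1) : ℝ) : ℂ) ≠ 0 := by exact_mod_cast ne_of_gt h2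
      rw [div_eq_div_iff (mul_ne_zero hne1 hne2) hne2]
      push_cast
      ring
  have hSnorm : ∀ k, ‖S k‖ ≤ 1 / T (k+1) := by
    intro k
    by_cases h : c k = 0
    · rw [hSdef]
      simp only [if_pos h, norm_zero]
      exact one_div_nonneg.mpr (hTnonneg (k+1))
    · rw [hSdef]
      simp only [if_neg h]
      have h1 : 0 < ‖c k‖ := norm_pos_iff.mpr h
      have h2 : 0 < T (k+1) := lt_of_lt_of_le h1 (hTk k)
      rw [norm_div, RCLike.norm_conj, Complex.norm_real, Real.norm_eq_abs,
        abs_of_pos (mul_pos h1 h2), div_mul_eq_div_div, div_self (ne_of_gt h1)]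
  have hS0 : Tendsto S atTop (𝓝 0) := by
    refine squeeze_zero_norm hSnorm ?_
    have h1 : Tendsto (fun k => T (k+1)) atTop atTop := hT.comp (tendsto_add_atTop_nat 1)
    have h2 := h1.inv_tendsto_atTop
    simp only [one_div]
    exact h2
  set t : ℕ → ℂ := fun n => S n - if n = 0 then 0 else S (n-1) with htdef
  set x : ℕ → ℂ := xOf l t with hxdef
  have htel : ∀ k, ∑ j ∈ Finset.range (k+1), t j = S k := by
    intro k
    simp only [htdef]
    exact telescope S k
  have hx0 : x ∈ cs0Lam l := by
    have heq : (fun m => ∑ n ∈ Finset.range (m+1), LamT l x n) = S := by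
      funext m
      rw [Finset.sum_congr rfl (fun n _ => LamT_xOf hmono hpos t n)]
      exact htel m
    unfold cs0Lam
    rw [Set.mem_setOf_eq, heq]
    exact hS0
  obtain ⟨L, hgL⟩ := H x hx0
  -- t tends to 0
  have htend_t : Tendsto t atTop (𝓝 0) := by
    have h1 : Tendsto (fun n => if n = 0 then (0:ℂ) else S (n-1)) atTop (𝓝 0) := by
      apply (hS0.comp (tendsto_sub_atTop_nat 1)).congr'
      filter_upwards [eventually_ge_atTop 1] with n hn
      simp only [Function.comp]
      rw [if_neg (by omega)]
    have := hS0.sub h1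
    rw [sub_self] at this
    exact this.congr (fun n => by rw [htdef])
  -- key identity
  have key : ∀ N, ∑ k ∈ Finset.range (N+2), a k * x k
      = (∑ k ∈ Finset.range N, c k * S k) + atil l a N * S N
        + bco l a (N+1) * t (N+1) := by
    intro N
    rw [show N+2 = (N+1)+1 from rfl, abelA hmono hpos a x (N+1)]
    have hLT : ∀ k, LamT l x k = t k := LamT_xOf hmono hpos t
    rw [show ((l (N+1):ℂ) * a (N+1) / ((dl l (N+1) : ℝ) : ℂ)) = bco l a (N+1) from rfl]
    rw [hLT (N+1)]
    congr 1
    rw [Finset.sum_congr rfl (fun k _ => by rw [hLT k]), abelB (atil l a) t N]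
    congr 1
    · exact Finset.sum_congr rfl (fun k _ => by rw [htel k])
    · rw [htel N]
  -- limits
  have hmid : Tendsto (fun N => atil l a N * S N) atTop (𝓝 0) := by
    refine squeeze_zero_norm (a := fun N => (C + C) * ‖S N‖) (fun N => ?_) ?_
    · rw [norm_mul]
      apply mul_le_mul_of_nonneg_right _ (norm_nonneg _)
      exact (atil_norm_le hmono hpos a N).trans (add_le_add (hC N) (hC (N+1)))
    · have := (tendsto_norm_zero.comp hS0).const_mul (C + C)
      simpa using this
  have hlast : Tendsto (fun N => bco l a (N+1) * t (N+1)) atTop (𝓝 0) := by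
    refine squeeze_zero_norm (a := fun N => C * ‖t (N+1)‖) (fun N => ?_) ?_
    · rw [norm_mul]
      exact mul_le_mul_of_nonneg_right (hC _) (norm_nonneg _)
    · have := (tendsto_norm_zero.comp (htend_t.comp (tendsto_add_atTop_nat 1))).const_mul C
      simpa using this
  have h1 : Tendsto (fun N => ∑ k ∈ Finset.range (N+2), a k * x k) atTop (𝓝 L) :=
    hgL.comp (tendsto_add_atTop_nat 1)
  have hP : Tendsto (fun N => ∑ k ∈ Finset.range N, c k * S k) atTop (𝓝 L) := by
    have heq : (fun N => ∑ k ∈ Finset.range N, c k * S k)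
        = fun N => (∑ k ∈ Finset.range (N+2), a k * x k)
          - atil l a N * S N - bco l a (N+1) * t (N+1) := by
      funext N
      rw [key N]
      ring
    rw [heq]
    have := (h1.sub hmid).sub hlast
    simpa using this
  -- pass to real partial sums
  set Q : ℕ → ℝ := fun N => ∑ k ∈ Finset.range N, ‖c k‖ / T (k+1) with hQdef
  have hPQ : ∀ N, ∑ k ∈ Finset.range N, c k * S k = ((Q N : ℝ) : ℂ) := by
    intro N
    rw [hQdef]
    push_cast
    refine Finset.sum_congr rfl (fun k _ => ?_)
    rw [hCS k]
  have hQ : Tendsto Q atTop (𝓝 L.re) := by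
    have h2 : Tendsto (fun N => (∑ k ∈ Finset.range N, c k * S k).re) atTop (𝓝 L.re) :=
      (Complex.continuous_re.tendsto L).comp hP
    apply h2.congr
    intro N
    rw [hPQ N, Complex.ofReal_re]
  -- Abel–Dini
  have hQdiff : ∀ N M, N ≤ M → 0 < T M → Q N + (1 - T N / T M) ≤ Q M := by
    intro N M hNM hTM
    have h1' : Q M - Q N = ∑ k ∈ Finset.Ico N M, ‖c k‖ / T (k+1) :=
      (Finset.sum_Ico_eq_sub _ hNM).symm
    have hTsub : T M - T N = ∑ k ∈ Finset.Ico N M, ‖c k‖ :=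
      (Finset.sum_Ico_eq_sub _ hNM).symm
    have h2' : ∀ k ∈ Finset.Ico N M, ‖c k‖ / T M ≤ ‖c k‖ / T (k+1) := by
      intro k hk
      by_cases hck : c k = 0
      · simp [hck]
      · have h3 : 0 < ‖c k‖ := norm_pos_iff.mpr hck
        have h4 : 0 < T (k+1) := lt_of_lt_of_le h3 (hTk k)
        have h5 : T (k+1) ≤ T M := hTmono (Finset.mem_Ico.mp hk).2
        exact div_le_div_of_nonneg_left (norm_nonneg _) h4 h5
    have h5 : (T M - T N)/T M ≤ Q M - Q N := by
      rw [h1', hTsub, Finset.sum_div]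
      exact Finset.sum_le_sum h2'
    have h6 : 1 - T N / T M = (T M - T N)/T M := by field_simp
    linarith
  have h6 : ∀ N, Q N + 1 ≤ L.re := by
    intro N
    have ht1 : Tendsto (fun M => Q N + (1 - T N / T M)) atTop (𝓝 (Q N + (1 - 0))) :=
      tendsto_const_nhds.add (tendsto_const_nhds.sub ((tendsto_const_nhds).div_atTop hT))
    have hev : ∀ᶠ M in atTop, Q N + (1 - T N / T M) ≤ Q M := by
      filter_upwards [eventually_ge_atTop N, hT.eventually_gt_atTop 0] with M hM1 hM2
      exact hQdiff N M hM1 hM2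
    have := le_of_tendsto_of_tendsto ht1 hQ hev
    simpa using this
  have h7 : L.re ≤ L.re - 1 := le_of_tendsto' hQ (fun N => by linarith [h6 N])
  linarith

theorem stmt15 (l : ℕ → ℝ) (hmono : StrictMono l) (hpos : 0 < l 0)
    (hlim : Tendsto l atTop atTop) (a : ℕ → ℂ) :
    ((∀ x ∈ csLam l,
        ∃ L, Tendsto (fun m => ∑ k ∈ Finset.range (m + 1), a k * x k) atTop (𝓝 L)) ↔
      ((Summable fun k => ‖atil l a k - atil l a (k + 1)‖) ∧
        ∃ C : ℝ, ∀ k, ‖(l k : ℂ) * a k / ((dl l k : ℝ) : ℂ)‖ ≤ C)) ∧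
    ((∀ x ∈ cs0Lam l,
        ∃ L, Tendsto (fun m => ∑ k ∈ Finset.range (m + 1), a k * x k) atTop (𝓝 L)) ↔
      ((Summable fun k => ‖atil l a k - atil l a (k + 1)‖) ∧
        ∃ C : ℝ, ∀ k, ‖(l k : ℂ) * a k / ((dl l k : ℝ) : ℂ)‖ ≤ C)) := by
  have hP1 := P1 hmono hpos a
  have hsub : ∀ x, x ∈ cs0Lam l → x ∈ csLam l := fun x hx => ⟨0, hx⟩
  constructor
  · constructor
    · intro Hcs
      have Hcs0 : ∀ x ∈ cs0Lam l,
          ∃ L, Tendsto (fun m => ∑ k ∈ Finset.range (m + 1), a k * x k) atTop (𝓝 L) :=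
        fun x hx => Hcs x (hsub x hx)
      obtain ⟨C, hC⟩ := step1 hmono hpos a Hcs0
      exact ⟨step2 hmono hpos a Hcs0 C hC, ⟨C, hC⟩⟩
    · rintro ⟨hsum, C, hC⟩
      exact hP1 hsum C hC
  · constructor
    · intro Hcs0
      obtain ⟨C, hC⟩ := step1 hmono hpos a Hcs0
      exact ⟨step2 hmono hpos a Hcs0 C hC, ⟨C, hC⟩⟩
    · rintro ⟨hsum, C, hC⟩
      intro x hx
      exact hP1 hsum C hC x (hsub x hx)
end
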